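/- Consider the linear regression model y_i = x_i·θ* + ε_i with θ* = 0, where x_i ∈ {−1,1}, the noises ε_1,...,ε_k are i.i.d., independent of the x_i, with zero mean, symmetric about 0, finite second moment σ² = E[ε_i²] and finite fourth moment μ_4 = E[ε_i⁴]. Then for every t > 0, the empirical process tail satisfies T_k(t) := P( sup_{θ∈[−1,1]} |(1/k)Σ_{i=1}^k (x_iθ − y_i)² − E[(xθ − y)²]| > t ) ≤ 8μ_4/(k t²) + 32σ²/(k t²). -/

import Mathlib

set_option autoImplicit false

open MeasureTheory ProbabilityTheory Real
open scoped ENNReal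

lemma integral_sq_sum_aux {Ω : Type*} [MeasurableSpace Ω] (μ : Measure Ω) (k : ℕ) (Z : ℕ → Ω → ℝ)
    (hint : ∀ i j, Integrable (fun ω => Z i ω * Z j ω) μ)
    (hzero : ∀ i j, i ≠ j → ∫ ω, Z i ω * Z j ω ∂μ = 0) :
    ∫ ω, (∑ i ∈ Finset.range k, Z i ω) ^ 2 ∂μ
      = ∑ i ∈ Finset.range k, ∫ ω, Z i ω ^ 2 ∂μ := by
  have hexp : ∀ ω : Ω, (∑ i ∈ Finset.range k, Z i ω) ^ 2
      = ∑ i ∈ Finset.range k, ∑ j ∈ Finset.range k, Z i ω * Z j ω := by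
    intro ω; rw [sq, Finset.sum_mul_sum]
  simp_rw [hexp]
  rw [integral_finset_sum _ (fun i _ => integrable_finset_sum _ (fun j _ => hint i j))]
  refine Finset.sum_congr rfl (fun i hi => ?_)
  rw [integral_finset_sum _ (fun j _ => hint i j),
    Finset.sum_eq_single i (fun j _ hj => hzero i j (Ne.symm hj)) (fun h => absurd hi h)]
  simp [sq]

/-- **Empirical process tail bound for the regression example (bound (31)-(32)).**
In the model `yᵢ = xᵢθ* + εᵢ` with `θ* = 0`, `xᵢ ∈ {−1,1}`, i.i.d. noises `εᵢ` independent
of the `xᵢ`, zero mean, symmetric, with `σ² = E[εᵢ²]` and `μ₄ = E[εᵢ⁴]` finite, the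
empirical process tail satisfies, for every `t > 0` (noting `E[(xθ−y)²] = θ² + σ²`):
`T_k(t) = P(sup_{θ∈[−1,1]} |(1/k)Σᵢ(xᵢθ−yᵢ)² − (θ²+σ²)| > t) ≤ 8μ₄/(kt²) + 32σ²/(kt²)`. -/
theorem regression_empirical_process_tail
    {Ω : Type*} [MeasurableSpace Ω] (μ : Measure Ω) [IsProbabilityMeasure μ]
    (x ε y : ℕ → Ω → ℝ)
    (hxm : ∀ i, Measurable (x i)) (hεm : ∀ i, Measurable (ε i))
    (hxpm : ∀ i ω, x i ω = 1 ∨ x i ω = -1)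
    (ν : Measure ℝ) [IsProbabilityMeasure ν]
    (hiid : iIndepFun ε μ)
    (hlaw : ∀ i, Measure.map (ε i) μ = ν)
    (hmean : ∫ e, e ∂ν = 0)
    (hsymm : Measure.map (fun e => -e) ν = ν)
    (hindep : IndepFun (fun ω (i : ℕ) => x i ω) (fun ω (i : ℕ) => ε i ω) μ)
    -- finite second and fourth moments
    (σ2 μ4 : ℝ)
    (hint2 : Integrable (fun e => e ^ 2) ν) (hσ2 : σ2 = ∫ e, e ^ 2 ∂ν)
    (hint4 : Integrable (fun e => e ^ 4) ν) (hμ4 : μ4 = ∫ e, e ^ 4 ∂ν)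
    -- the model: `yᵢ = xᵢ·θ* + εᵢ` with true coefficient `θ* = 0`
    (hy : ∀ i ω, y i ω = x i ω * 0 + ε i ω)
    (k : ℕ) (hk : 0 < k)
    (t : ℝ) (ht : 0 < t) :
    (μ {ω | (⨆ θ : Set.Icc (-1 : ℝ) 1,
        |(k : ℝ)⁻¹ * ∑ i ∈ Finset.range k, (x i ω * (θ : ℝ) - y i ω) ^ 2 -
          ((θ : ℝ) ^ 2 + σ2)|) > t}).toReal ≤
      8 * μ4 / (k * t ^ 2) + 32 * σ2 / (k * t ^ 2) := by
  have hkR : (0 : ℝ) < (k : ℝ) := by exact_mod_cast hk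
  have hkne : (k : ℝ) ≠ 0 := ne_of_gt hkR
  have hy' : ∀ i ω, y i ω = ε i ω := by intro i ω; rw [hy]; ring
  have hx2 : ∀ i ω, x i ω ^ 2 = 1 := by
    intro i ω; rcases hxpm i ω with h | h <;> rw [h] <;> norm_num
  -- pullback of integrals and integrability
  have hpullI : ∀ (i : ℕ) (f : ℝ → ℝ), Measurable f → Integrable f ν →
      Integrable (fun ω => f (ε i ω)) μ := by
    intro i f hf hif
    rw [← hlaw i] at hif
    exact (integrable_map_measure hf.aestronglyMeasurable (hεm i).aemeasurable).mp hif
  have hpullE : ∀ (i : ℕ) (f : ℝ → ℝ), Measurable f →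
      ∫ ω, f (ε i ω) ∂μ = ∫ e, f e ∂ν := by
    intro i f hf
    rw [← hlaw i, integral_map (hεm i).aemeasurable hf.aestronglyMeasurable]
  -- basic moments
  have hεint : ∀ i, Integrable (ε i) μ := by
    intro i
    have : Integrable (fun e : ℝ => e) ν := by
      refine Integrable.mono' (hint2.add (integrable_const 1)) aestronglyMeasurable_id ?_
      filter_upwards with e
      have h := sq_nonneg (|e| - 1)
      rw [norm_eq_abs]
      simp only [Pi.add_apply]
      nlinarith [sq_abs e]
    exact hpullI i (fun e => e) measurable_id this
  have hEε : ∀ i, ∫ ω, ε i ω ∂μ = 0 := fun i => by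
    rw [hpullE i (fun e => e) measurable_id]; exact hmean
  have hεsqint : ∀ i, Integrable (fun ω => ε i ω ^ 2) μ :=
    fun i => hpullI i (fun e => e ^ 2) (measurable_id.pow_const 2) hint2
  have hEε2 : ∀ i, ∫ ω, ε i ω ^ 2 ∂μ = σ2 := fun i => by
    rw [hpullE i (fun e => e ^ 2) (measurable_id.pow_const 2)]; exact hσ2.symm
  have hσ2nn : 0 ≤ σ2 := hσ2 ▸ integral_nonneg (fun e => sq_nonneg e)
  have hμ4nn : 0 ≤ μ4 := hμ4 ▸ integral_nonneg (fun e => by positivity)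
  -- the two centered averages
  set A : Ω → ℝ := fun ω => (k : ℝ)⁻¹ * ∑ i ∈ Finset.range k, (ε i ω ^ 2 - σ2) with hA
  set B : Ω → ℝ := fun ω => (k : ℝ)⁻¹ * ∑ i ∈ Finset.range k, x i ω * ε i ω with hB
  -- pointwise identity
  have key : ∀ (ω : Ω) (θ : ℝ),
      (k : ℝ)⁻¹ * ∑ i ∈ Finset.range k, (x i ω * θ - y i ω) ^ 2 - (θ ^ 2 + σ2)
        = A ω - 2 * θ * B ω := by
    intro ω θ
    have h1 : ∑ i ∈ Finset.range k, (x i ω * θ - y i ω) ^ 2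
        = ∑ i ∈ Finset.range k, (θ ^ 2 + ((-2 * θ) * (x i ω * ε i ω) + ε i ω ^ 2)) := by
      refine Finset.sum_congr rfl (fun i _ => ?_)
      rw [hy' i ω]
      linear_combination θ ^ 2 * hx2 i ω
    rw [h1, Finset.sum_add_distrib, Finset.sum_add_distrib, Finset.sum_const,
      Finset.card_range, ← Finset.mul_sum, hA, hB]
    simp only
    rw [Finset.sum_sub_distrib, Finset.sum_const, Finset.card_range]
    push_cast
    field_simp
    ring
  -- sup bound
  haveI : Nonempty (Set.Icc (-1 : ℝ) 1) := ⟨⟨0, by norm_num⟩⟩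
  have hsup : ∀ ω : Ω, (⨆ θ : Set.Icc (-1 : ℝ) 1,
      |(k : ℝ)⁻¹ * ∑ i ∈ Finset.range k, (x i ω * (θ : ℝ) - y i ω) ^ 2 -
        ((θ : ℝ) ^ 2 + σ2)|) ≤ |A ω| + 2 * |B ω| := by
    intro ω
    refine ciSup_le (fun θ => ?_)
    rw [key ω θ]
    calc |A ω - 2 * (θ : ℝ) * B ω| ≤ |A ω| + |2 * (θ : ℝ) * B ω| := abs_sub _ _
      _ ≤ |A ω| + 2 * |B ω| := by
          have hθ : |(θ : ℝ)| ≤ 1 := abs_le.mpr ⟨θ.2.1, θ.2.2⟩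
          have : |2 * (θ : ℝ) * B ω| = 2 * |(θ : ℝ)| * |B ω| := by
            rw [abs_mul, abs_mul]; norm_num
          rw [this]
          nlinarith [abs_nonneg (B ω), abs_nonneg (θ : ℝ)]
  -- event inclusion
  have hsub : {ω : Ω | (⨆ θ : Set.Icc (-1 : ℝ) 1,
      |(k : ℝ)⁻¹ * ∑ i ∈ Finset.range k, (x i ω * (θ : ℝ) - y i ω) ^ 2 -
        ((θ : ℝ) ^ 2 + σ2)|) > t}
      ⊆ {ω : Ω | (t / 2) ^ 2 ≤ A ω ^ 2} ∪ {ω : Ω | (t / 4) ^ 2 ≤ B ω ^ 2} := by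
    intro ω hω
    by_contra hcon
    simp only [Set.mem_union, Set.mem_setOf_eq, not_or, not_le] at hcon
    obtain ⟨h1, h2⟩ := hcon
    have hA' : |A ω| < t / 2 := by nlinarith [abs_nonneg (A ω), sq_abs (A ω)]
    have hB' : |B ω| < t / 4 := by nlinarith [abs_nonneg (B ω), sq_abs (B ω)]
    have := hsup ω
    have : t < |A ω| + 2 * |B ω| := lt_of_lt_of_le hω this
    linarith
  -- integrabilities for the A-part
  set Z : ℕ → Ω → ℝ := fun i ω => ε i ω ^ 2 - σ2 with hZ
  have hZint : ∀ i, Integrable (Z i) μ := fun i => (hεsqint i).sub (integrable_const σ2)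
  have hZm : ∀ i, Measurable (Z i) := fun i => ((hεm i).pow_const 2).sub measurable_const
  have hEZ : ∀ i, ∫ ω, Z i ω ∂μ = 0 := by
    intro i
    rw [hZ]
    simp only
    rw [integral_sub (hεsqint i) (integrable_const σ2), hEε2 i, integral_const]
    simp
  have hZsqint : ∀ i, Integrable (fun ω => Z i ω ^ 2) μ := by
    intro i
    have hf : Integrable (fun e : ℝ => (e ^ 2 - σ2) ^ 2) ν := by
      have : (fun e : ℝ => (e ^ 2 - σ2) ^ 2)
          = fun e => e ^ 4 - 2 * σ2 * e ^ 2 + σ2 ^ 2 := funext fun e => by ring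
      rw [this]
      exact (hint4.sub (hint2.const_mul _)).add (integrable_const _)
    exact hpullI i (fun e => (e ^ 2 - σ2) ^ 2) (((measurable_id.pow_const 2).sub measurable_const).pow_const 2) hf
  have hZmulint : ∀ i j, Integrable (fun ω => Z i ω * Z j ω) μ := by
    intro i j
    rcases eq_or_ne i j with rfl | hij
    · simpa [sq] using hZsqint i
    · have hind : IndepFun (Z i) (Z j) μ :=
        (hiid.indepFun hij).comp (φ := fun e => e ^ 2 - σ2) (ψ := fun e => e ^ 2 - σ2)
          ((measurable_id.pow_const 2).sub measurable_const)
          ((measurable_id.pow_const 2).sub measurable_const)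
      exact hind.integrable_mul (hZint i) (hZint j)
  have hZzero : ∀ i j, i ≠ j → ∫ ω, Z i ω * Z j ω ∂μ = 0 := by
    intro i j hij
    have hind : IndepFun (Z i) (Z j) μ :=
      (hiid.indepFun hij).comp (φ := fun e => e ^ 2 - σ2) (ψ := fun e => e ^ 2 - σ2)
        ((measurable_id.pow_const 2).sub measurable_const)
        ((measurable_id.pow_const 2).sub measurable_const)
    have hval := hind.integral_mul_eq_mul_integral (hZint i).aestronglyMeasurable (hZint j).aestronglyMeasurable
    rw [hEZ i, hEZ j, mul_zero] at hval
    exact hval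
  have hEZsq : ∀ i, ∫ ω, Z i ω ^ 2 ∂μ = μ4 - σ2 ^ 2 := by
    intro i
    have : ∫ ω, Z i ω ^ 2 ∂μ = ∫ e, (e ^ 2 - σ2) ^ 2 ∂ν :=
      hpullE i (fun e => (e ^ 2 - σ2) ^ 2) (((measurable_id.pow_const 2).sub measurable_const).pow_const 2)
    rw [this]
    have h1 : (fun e : ℝ => (e ^ 2 - σ2) ^ 2)
        = fun e => e ^ 4 - 2 * σ2 * e ^ 2 + σ2 ^ 2 := funext fun e => by ring
    have hI1 : Integrable (fun e : ℝ => 2 * σ2 * e ^ 2) ν := hint2.const_mul _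
    have hI2 : Integrable (fun e : ℝ => e ^ 4 - 2 * σ2 * e ^ 2) ν := hint4.sub hI1
    rw [h1, integral_add hI2 (integrable_const _), integral_sub hint4 hI1,
      integral_const_mul, integral_const]
    simp only [measure_univ, probReal_univ, ENNReal.toReal_one, smul_eq_mul, one_mul, mul_one]
    rw [← hμ4, ← hσ2]
    ring
  -- integrabilities for the B-part
  set W : ℕ → Ω → ℝ := fun i ω => x i ω * ε i ω with hW
  have hWm : ∀ i, Measurable (W i) := fun i => (hxm i).mul (hεm i)
  have hεprodint : ∀ i j, Integrable (fun ω => ε i ω * ε j ω) μ := by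
    intro i j
    rcases eq_or_ne i j with rfl | hij
    · simpa [sq] using hεsqint i
    · exact (hiid.indepFun hij).integrable_mul (hεint i) (hεint j)
  have hWmulint : ∀ i j, Integrable (fun ω => W i ω * W j ω) μ := by
    intro i j
    refine Integrable.mono' ((hεprodint i j).abs) ((hWm i).mul (hWm j)).aestronglyMeasurable ?_
    filter_upwards with ω
    have hi : |x i ω| = 1 := by rcases hxpm i ω with h | h <;> simp [h]
    have hj : |x j ω| = 1 := by rcases hxpm j ω with h | h <;> simp [h]
    rw [norm_eq_abs, hW]
    simp only
    rw [show x i ω * ε i ω * (x j ω * ε j ω) = (x i ω * x j ω) * (ε i ω * ε j ω) by ring,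
      abs_mul, abs_mul, hi, hj]
    simp
  have hWzero : ∀ i j, i ≠ j → ∫ ω, W i ω * W j ω ∂μ = 0 := by
    intro i j hij
    have hxint : Integrable (fun ω => x i ω * x j ω) μ := by
      refine Integrable.mono' (integrable_const 1) ((hxm i).mul (hxm j)).aestronglyMeasurable ?_
      filter_upwards with ω
      have hi : |x i ω| = 1 := by rcases hxpm i ω with h | h <;> simp [h]
      have hj : |x j ω| = 1 := by rcases hxpm j ω with h | h <;> simp [h]
      rw [norm_eq_abs, abs_mul, hi, hj]; norm_num
    have hcomp : IndepFun (fun ω => x i ω * x j ω) (fun ω => ε i ω * ε j ω) μ :=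
      hindep.comp (φ := fun v : ℕ → ℝ => v i * v j) (ψ := fun v : ℕ → ℝ => v i * v j)
        ((measurable_pi_apply i).mul (measurable_pi_apply j))
        ((measurable_pi_apply i).mul (measurable_pi_apply j))
    have heq : ∀ ω : Ω, W i ω * W j ω = (x i ω * x j ω) * (ε i ω * ε j ω) := by
      intro ω; rw [hW]; simp only; ring
    have hval := hcomp.integral_mul_eq_mul_integral hxint.aestronglyMeasurable (hεprodint i j).aestronglyMeasurable
    have hε0 := (hiid.indepFun hij).integral_mul_eq_mul_integral (hεint i).aestronglyMeasurable (hεint j).aestronglyMeasurable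
    rw [hEε i, hEε j, mul_zero] at hε0
    have hε0' : ∫ ω, ε i ω * ε j ω ∂μ = 0 := hε0
    rw [hε0', mul_zero] at hval
    rw [integral_congr_ae (ae_of_all _ heq)]
    exact hval
  have hEWsq : ∀ i, ∫ ω, W i ω ^ 2 ∂μ = σ2 := by
    intro i
    have heq : ∀ ω : Ω, W i ω ^ 2 = ε i ω ^ 2 := by
      intro ω; rw [hW]; simp only; rw [mul_pow, hx2 i ω, one_mul]
    rw [integral_congr_ae (ae_of_all _ heq), hEε2 i]
  -- second moments of A and B
  have hsumZint : Integrable (fun ω => (∑ i ∈ Finset.range k, Z i ω) ^ 2) μ := by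
    have : (fun ω => (∑ i ∈ Finset.range k, Z i ω) ^ 2)
        = fun ω => ∑ i ∈ Finset.range k, ∑ j ∈ Finset.range k, Z i ω * Z j ω := by
      funext ω; rw [sq, Finset.sum_mul_sum]
    rw [this]
    exact integrable_finset_sum _ (fun i _ => integrable_finset_sum _ (fun j _ => hZmulint i j))
  have hsumWint : Integrable (fun ω => (∑ i ∈ Finset.range k, W i ω) ^ 2) μ := by
    have : (fun ω => (∑ i ∈ Finset.range k, W i ω) ^ 2)
        = fun ω => ∑ i ∈ Finset.range k, ∑ j ∈ Finset.range k, W i ω * W j ω := by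
      funext ω; rw [sq, Finset.sum_mul_sum]
    rw [this]
    exact integrable_finset_sum _ (fun i _ => integrable_finset_sum _ (fun j _ => hWmulint i j))
  have hAsq : (fun ω => A ω ^ 2)
      = fun ω => ((k : ℝ)⁻¹) ^ 2 * (∑ i ∈ Finset.range k, Z i ω) ^ 2 := by
    funext ω; rw [hA]; simp only; ring
  have hBsq : (fun ω => B ω ^ 2)
      = fun ω => ((k : ℝ)⁻¹) ^ 2 * (∑ i ∈ Finset.range k, W i ω) ^ 2 := by
    funext ω; rw [hB]; simp only; ring
  have hAsqint : Integrable (fun ω => A ω ^ 2) μ := by rw [hAsq]; exact hsumZint.const_mul _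
  have hBsqint : Integrable (fun ω => B ω ^ 2) μ := by rw [hBsq]; exact hsumWint.const_mul _
  have hEA : ∫ ω, A ω ^ 2 ∂μ = (μ4 - σ2 ^ 2) / k := by
    rw [hAsq, integral_const_mul, integral_sq_sum_aux μ k Z hZmulint hZzero]
    simp only [hEZsq]
    rw [Finset.sum_const, Finset.card_range]
    field_simp
    ring
  have hEB : ∫ ω, B ω ^ 2 ∂μ = σ2 / k := by
    rw [hBsq, integral_const_mul, integral_sq_sum_aux μ k W hWmulint hWzero]
    simp only [hEWsq]
    rw [Finset.sum_const, Finset.card_range]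
    field_simp
    ring
  -- Chebyshev bounds
  have chebA := mul_meas_ge_le_integral_of_nonneg
    (ae_of_all μ (fun ω => sq_nonneg (A ω))) hAsqint ((t / 2) ^ 2)
  have chebB := mul_meas_ge_le_integral_of_nonneg
    (ae_of_all μ (fun ω => sq_nonneg (B ω))) hBsqint ((t / 4) ^ 2)
  rw [hEA] at chebA
  rw [hEB] at chebB
  -- combine
  have hfin1 : μ {ω : Ω | (t / 2) ^ 2 ≤ A ω ^ 2} ≠ ⊤ := measure_ne_top _ _
  have hfin2 : μ {ω : Ω | (t / 4) ^ 2 ≤ B ω ^ 2} ≠ ⊤ := measure_ne_top _ _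
  have hmeas : (μ {ω : Ω | (⨆ θ : Set.Icc (-1 : ℝ) 1,
      |(k : ℝ)⁻¹ * ∑ i ∈ Finset.range k, (x i ω * (θ : ℝ) - y i ω) ^ 2 -
        ((θ : ℝ) ^ 2 + σ2)|) > t}).toReal
      ≤ (μ {ω : Ω | (t / 2) ^ 2 ≤ A ω ^ 2}).toReal + (μ {ω : Ω | (t / 4) ^ 2 ≤ B ω ^ 2}).toReal := by
    calc (μ _).toReal ≤ (μ ({ω : Ω | (t / 2) ^ 2 ≤ A ω ^ 2} ∪ {ω : Ω | (t / 4) ^ 2 ≤ B ω ^ 2})).toReal :=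
          ENNReal.toReal_mono (measure_ne_top _ _) (measure_mono hsub)
      _ ≤ ((μ {ω : Ω | (t / 2) ^ 2 ≤ A ω ^ 2}) + μ {ω : Ω | (t / 4) ^ 2 ≤ B ω ^ 2}).toReal :=
          ENNReal.toReal_mono (by finiteness) (measure_union_le _ _)
      _ = _ := ENNReal.toReal_add hfin1 hfin2
  have ht2 : (0 : ℝ) < (t / 2) ^ 2 := by positivity
  have ht4 : (0 : ℝ) < (t / 4) ^ 2 := by positivity
  have hA' : (μ {ω : Ω | (t / 2) ^ 2 ≤ A ω ^ 2}).toReal ≤ (μ4 - σ2 ^ 2) / k / (t / 2) ^ 2 := by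
    rw [← le_div_iff₀' ht2] at chebA
    exact chebA
  have hB' : (μ {ω : Ω | (t / 4) ^ 2 ≤ B ω ^ 2}).toReal ≤ σ2 / k / (t / 4) ^ 2 := by
    rw [← le_div_iff₀' ht4] at chebB
    exact chebB
  have hAbound : (μ4 - σ2 ^ 2) / k / (t / 2) ^ 2 ≤ 8 * μ4 / (k * t ^ 2) := by
    have heq : (μ4 - σ2 ^ 2) / k / (t / 2) ^ 2 = 4 * (μ4 - σ2 ^ 2) / (k * t ^ 2) := by
      field_simp; ring
    rw [heq, div_le_div_iff_of_pos_right (by positivity)]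
    nlinarith [sq_nonneg σ2]
  have hBbound : σ2 / k / (t / 4) ^ 2 ≤ 32 * σ2 / (k * t ^ 2) := by
    have heq : σ2 / k / (t / 4) ^ 2 = 16 * σ2 / (k * t ^ 2) := by
      field_simp; ring
    rw [heq, div_le_div_iff_of_pos_right (by positivity)]
    linarith
  linarith [hmeas, le_trans hA' hAbound, le_trans hB' hBbound]
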